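/- Let x ∈ ℝ^d. Set G(y) := ∫ k(y | x₀) p₀(x₀) exp(r(x₀)/β) dx₀. Assume: pₜ is finite in a neighborhood of x and differentiable at x with pₜ(x) > 0; G is finite in a neighborhood of x, differentiable at x, and G(x) > 0. Then qₜ = G/Z, so qₜ(x) > 0 and qₜ is differentiable at x, and the score of the reward-weighted noised marginal decomposes as ∇ log qₜ(x) = ∇ log pₜ(x) + ∇[y ↦ log (G(y)/pₜ(y))](x), where for every y with pₜ(y) > 0 one has G(y)/pₜ(y) = ∫ p(x₀ | y) exp(r(x₀)/β) dx₀, the posterior conditional expectation of exp(r(·)/β). That is, the optimal score for the reward-weighted model equals the pre-trained score plus the gradient of the log conditional expectation of the exponentiated reward. -/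

import Mathlib

open MeasureTheory Filter

noncomputable section

/-- `Vec d` is `ℝ^d`, equipped with Lebesgue measure. -/
abbrev Vec (d : ℕ) := EuclideanSpace ℝ (Fin d)

variable {d : ℕ}

/-- The noised marginal `pₜ(x) = ∫ k(x | x₀) p₀(x₀) dx₀`. -/
def pT (k : Vec d → Vec d → ℝ) (p₀ : Vec d → ℝ) (x : Vec d) : ℝ :=
  ∫ x₀, k x x₀ * p₀ x₀

/-- The posterior density `p(x₀ | x) = k(x | x₀) p₀(x₀) / pₜ(x)`. -/
def post (k : Vec d → Vec d → ℝ) (p₀ : Vec d → ℝ) (x x₀ : Vec d) : ℝ :=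
  k x x₀ * p₀ x₀ / pT k p₀ x

/-- The normalizing constant `Z = ∫ p₀(x₀) exp(r(x₀)/β) dx₀`. -/
def Zconst (p₀ r : Vec d → ℝ) (β : ℝ) : ℝ :=
  ∫ x₀, p₀ x₀ * Real.exp (r x₀ / β)

/-- `G(y) = ∫ k(y | x₀) p₀(x₀) exp(r(x₀)/β) dx₀`. -/
def Gfun (k : Vec d → Vec d → ℝ) (p₀ r : Vec d → ℝ) (β : ℝ) (y : Vec d) : ℝ :=
  ∫ x₀, k y x₀ * p₀ x₀ * Real.exp (r x₀ / β)

/-- The reward-weighted density `q₀(x₀) = p₀(x₀) exp(r(x₀)/β) / Z`. -/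
def q0 (p₀ r : Vec d → ℝ) (β : ℝ) (x₀ : Vec d) : ℝ :=
  p₀ x₀ * Real.exp (r x₀ / β) / Zconst p₀ r β

/-- The reward-weighted noised marginal `qₜ(x) = ∫ k(x | x₀) q₀(x₀) dx₀`. -/
def qT (k : Vec d → Vec d → ℝ) (p₀ r : Vec d → ℝ) (β : ℝ) (x : Vec d) : ℝ :=
  ∫ x₀, k x x₀ * q0 p₀ r β x₀

/-- The score of the reward-weighted noised marginal decomposes as the
pre-trained score plus the gradient of the log conditional expectation of the
exponentiated reward. -/
theorem reward_weighted_score_decomposition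
    (d : ℕ) (hd : 1 ≤ d)
    -- `p₀` is a probability density
    (p₀ : Vec d → ℝ) (hp₀_meas : Measurable p₀) (hp₀_nonneg : ∀ x₀, 0 ≤ p₀ x₀)
    (hp₀_int : ∫ x₀, p₀ x₀ = 1)
    -- `k` is a forward kernel: nonnegative, measurable, and a density in its first argument
    (k : Vec d → Vec d → ℝ) (hk_meas : Measurable (Function.uncurry k))
    (hk_nonneg : ∀ y x₀, 0 ≤ k y x₀) (hk_dens : ∀ x₀, ∫ y, k y x₀ = 1)
    -- reward `r` and inverse temperature `β`; `Z` is finite and positive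
    (r : Vec d → ℝ) (hr_meas : Measurable r) (β : ℝ) (hβ : 0 < β)
    (hZ_int : Integrable (fun x₀ => p₀ x₀ * Real.exp (r x₀ / β)))
    (hZ_pos : 0 < Zconst p₀ r β)
    -- the point `x`
    (x : Vec d)
    -- `pₜ` is finite in a neighborhood of `x`, differentiable at `x`, and `pₜ(x) > 0`
    (hpt_fin : ∀ᶠ y in nhds x, Integrable fun x₀ => k y x₀ * p₀ x₀)
    (hpt_diff : DifferentiableAt ℝ (pT k p₀) x)
    (hpt_pos : 0 < pT k p₀ x)
    -- `G` is finite in a neighborhood of `x`, differentiable at `x`, and `G(x) > 0`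
    (hG_fin : ∀ᶠ y in nhds x,
      Integrable fun x₀ => k y x₀ * p₀ x₀ * Real.exp (r x₀ / β))
    (hG_diff : DifferentiableAt ℝ (Gfun k p₀ r β) x)
    (hG_pos : 0 < Gfun k p₀ r β x) :
    -- `qₜ = G / Z`
    (∀ y, qT k p₀ r β y = Gfun k p₀ r β y / Zconst p₀ r β) ∧
    -- `qₜ(x) > 0`
    0 < qT k p₀ r β x ∧
    -- `qₜ` is differentiable at `x`
    DifferentiableAt ℝ (qT k p₀ r β) x ∧
    -- score decomposition: `∇ log qₜ(x) = ∇ log pₜ(x) + ∇[y ↦ log (G(y)/pₜ(y))](x)`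
    gradient (fun y => Real.log (qT k p₀ r β y)) x
      = gradient (fun y => Real.log (pT k p₀ y)) x
        + gradient (fun y => Real.log (Gfun k p₀ r β y / pT k p₀ y)) x ∧
    -- `G/pₜ` is the posterior conditional expectation of `exp(r(·)/β)`
    (∀ y, 0 < pT k p₀ y →
      Gfun k p₀ r β y / pT k p₀ y
        = ∫ x₀, post k p₀ y x₀ * Real.exp (r x₀ / β)) := by
  have hqG : ∀ y, qT k p₀ r β y = Gfun k p₀ r β y / Zconst p₀ r β := by
    intro y
    unfold qT q0 Gfun
    rw [← integral_div]
    congr 1; funext x₀; ring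
  have hZne : Zconst p₀ r β ≠ 0 := ne_of_gt hZ_pos
  have hGne : Gfun k p₀ r β x ≠ 0 := ne_of_gt hG_pos
  have hPne : pT k p₀ x ≠ 0 := ne_of_gt hpt_pos
  have hqT_pos : 0 < qT k p₀ r β x := by
    rw [hqG]; exact div_pos hG_pos hZ_pos
  have hqT_eq : qT k p₀ r β = fun y => Gfun k p₀ r β y / Zconst p₀ r β := funext hqG
  have hqT_diff : DifferentiableAt ℝ (qT k p₀ r β) x := by
    rw [hqT_eq]; simp only [div_eq_mul_inv]; exact hG_diff.mul_const _
  -- eventual positivity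
  have hGpos_ev : ∀ᶠ y in nhds x, 0 < Gfun k p₀ r β y :=
    hG_diff.continuousAt.eventually (eventually_gt_nhds hG_pos)
  have hPpos_ev : ∀ᶠ y in nhds x, 0 < pT k p₀ y :=
    hpt_diff.continuousAt.eventually (eventually_gt_nhds hpt_pos)
  have hlogG : DifferentiableAt ℝ (fun y => Real.log (Gfun k p₀ r β y)) x :=
    hG_diff.log hGne
  have hlogP : DifferentiableAt ℝ (fun y => Real.log (pT k p₀ y)) x :=
    hpt_diff.log hPne
  have hgrad : gradient (fun y => Real.log (qT k p₀ r β y)) x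
      = gradient (fun y => Real.log (pT k p₀ y)) x
        + gradient (fun y => Real.log (Gfun k p₀ r β y / pT k p₀ y)) x := by
    have hL : gradient (fun y => Real.log (qT k p₀ r β y)) x
        = gradient (fun y => Real.log (Gfun k p₀ r β y)) x := by
      have heq : (fun y => Real.log (qT k p₀ r β y))
          =ᶠ[nhds x] (fun y => Real.log (Gfun k p₀ r β y) - Real.log (Zconst p₀ r β)) := by
        filter_upwards [hGpos_ev] with y hy
        rw [hqG y, Real.log_div (ne_of_gt hy) hZne]
      rw [heq.gradient_eq]
      unfold gradient
      rw [fderiv_sub_const]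
    have hR : gradient (fun y => Real.log (Gfun k p₀ r β y / pT k p₀ y)) x
        = gradient (fun y => Real.log (Gfun k p₀ r β y)) x
          - gradient (fun y => Real.log (pT k p₀ y)) x := by
      have heq : (fun y => Real.log (Gfun k p₀ r β y / pT k p₀ y))
          =ᶠ[nhds x] (fun y => Real.log (Gfun k p₀ r β y) - Real.log (pT k p₀ y)) := by
        filter_upwards [hGpos_ev, hPpos_ev] with y h1 h2
        rw [Real.log_div (ne_of_gt h1) (ne_of_gt h2)]
      rw [heq.gradient_eq]
      unfold gradient
      rw [fderiv_fun_sub hlogG hlogP, map_sub]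
    rw [hL, hR]; abel
  refine ⟨hqG, hqT_pos, hqT_diff, hgrad, ?_⟩
  intro y hy
  unfold Gfun post
  rw [← integral_div]
  congr 1; funext x₀; ring


end
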